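/- Let v₁, v₂, v₃ ∈ ℤ³ be affinely independent points (over ℝ), and suppose there is a linear form w ∈ Hom(ℤ³, ℤ) with ⟨w, vᵢ⟩ = 1 for i = 1, 2, 3. If the only points of ℤ³ lying in the triangle conv{v₁, v₂, v₃} ⊆ ℝ³ are v₁, v₂ and v₃ (i.e. the triangle is empty), then (v₁, v₂, v₃) is a ℤ-basis of ℤ³; equivalently, the 3×3 integer matrix with columns v₁, v₂, v₃ has determinant 1 or −1. -/

import Mathlib

open Matrix

/-- The coordinatewise embedding `ℤ³ → ℝ³`. -/
def toR3 (v : Fin 3 → ℤ) : Fin 3 → ℝ := fun i => (v i : ℝ)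

private lemma w_eq_sum (v : Fin 3 → ℤ) (w : (Fin 3 → ℤ) →ₗ[ℤ] ℤ) :
    w v = ∑ i, v i * w (Pi.single i 1) := by
  conv_lhs => rw [pi_eq_sum_univ v]
  rw [map_sum]
  refine Finset.sum_congr rfl fun i _ => ?_
  rw [show (fun j => if i = j then (1:ℤ) else 0) = Pi.single i 1 by
      funext j; simp [Pi.single_apply, eq_comm], LinearMap.map_smul, smul_eq_mul]

/-- An empty lattice triangle in `ℤ³` lying at height `1` with respect to the
origin has its three vertices forming a `ℤ`-basis of `ℤ³`; equivalently the matrix with columns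
`v₁, v₂, v₃` has determinant `±1`. -/
theorem empty_triangle_at_height_one_is_basis
    (v₁ v₂ v₃ : Fin 3 → ℤ)
    (haff : AffineIndependent ℝ ![toR3 v₁, toR3 v₂, toR3 v₃])
    (w : (Fin 3 → ℤ) →ₗ[ℤ] ℤ)
    (hw₁ : w v₁ = 1) (hw₂ : w v₂ = 1) (hw₃ : w v₃ = 1)
    (hempty : ∀ p : Fin 3 → ℤ,
      toR3 p ∈ convexHull ℝ {toR3 v₁, toR3 v₂, toR3 v₃} → p = v₁ ∨ p = v₂ ∨ p = v₃) :
    (Matrix.of ![v₁, v₂, v₃])ᵀ.det = 1 ∨ (Matrix.of ![v₁, v₂, v₃])ᵀ.det = -1 := by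
  set M : Matrix (Fin 3) (Fin 3) ℤ := (Matrix.of ![v₁, v₂, v₃])ᵀ with hM
  -- the height equations, cast to ℝ
  have e₁ : (v₁ 0 : ℝ) * (w (Pi.single 0 1) : ℝ) + (v₁ 1 : ℝ) * (w (Pi.single 1 1) : ℝ)
      + (v₁ 2 : ℝ) * (w (Pi.single 2 1) : ℝ) = 1 := by
    have h := w_eq_sum v₁ w; rw [hw₁, Fin.sum_univ_three] at h; exact_mod_cast h.symm
  have e₂ : (v₂ 0 : ℝ) * (w (Pi.single 0 1) : ℝ) + (v₂ 1 : ℝ) * (w (Pi.single 1 1) : ℝ)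
      + (v₂ 2 : ℝ) * (w (Pi.single 2 1) : ℝ) = 1 := by
    have h := w_eq_sum v₂ w; rw [hw₂, Fin.sum_univ_three] at h; exact_mod_cast h.symm
  have e₃ : (v₃ 0 : ℝ) * (w (Pi.single 0 1) : ℝ) + (v₃ 1 : ℝ) * (w (Pi.single 1 1) : ℝ)
      + (v₃ 2 : ℝ) * (w (Pi.single 2 1) : ℝ) = 1 := by
    have h := w_eq_sum v₃ w; rw [hw₃, Fin.sum_univ_three] at h; exact_mod_cast h.symm
  -- real linear independence
  have hli : LinearIndependent ℝ ![toR3 v₁, toR3 v₂, toR3 v₃] := by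
    rw [Fintype.linearIndependent_iff]
    intro c hc
    have hcc : ∀ i : Fin 3, c 0 * (v₁ i : ℝ) + c 1 * (v₂ i : ℝ) + c 2 * (v₃ i : ℝ) = 0 := by
      intro i
      have h := congrFun hc i
      rw [Fin.sum_univ_three] at h
      simpa [toR3] using h
    have hsum : c 0 + c 1 + c 2 = 0 := by
      linear_combination (w (Pi.single 0 1) : ℝ) * hcc 0 + (w (Pi.single 1 1) : ℝ) * hcc 1
        + (w (Pi.single 2 1) : ℝ) * hcc 2 - c 0 * e₁ - c 1 * e₂ - c 2 * e₃
    have key := affineIndependent_iff.mp haff Finset.univ c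
      (by rw [Fin.sum_univ_three]; exact hsum)
      (by rw [Fin.sum_univ_three] at hc ⊢; exact hc)
    exact fun i => key i (Finset.mem_univ i)
  -- integer determinant nonzero
  have hdet0 : M.det ≠ 0 := by
    intro h0
    have hunit : IsUnit (M.map (Int.cast : ℤ → ℝ)) := by
      rw [← Matrix.linearIndependent_cols_iff_isUnit]
      have hcol : (fun i => (M.map (Int.cast : ℤ → ℝ))ᵀ i) = ![toR3 v₁, toR3 v₂, toR3 v₃] := by
        funext i; fin_cases i <;> rfl
      rw [show (M.map (Int.cast : ℤ → ℝ)).col = ![toR3 v₁, toR3 v₂, toR3 v₃] from hcol]; exact hli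
    have hdet : ((M.map (Int.cast : ℤ → ℝ))).det = (M.det : ℝ) := by
      rw [show M.map (Int.cast : ℤ → ℝ) = (Int.castRingHom ℝ).mapMatrix M from rfl,
        ← RingHom.map_det]; rfl
    rw [isUnit_iff_isUnit_det, hdet, h0] at hunit
    simpa using hunit
  -- rational matrix is a unit
  set N : Matrix (Fin 3) (Fin 3) ℚ := M.map (Int.cast : ℤ → ℚ) with hN
  have hNdet : N.det = (M.det : ℚ) := by
    rw [show N = (Int.castRingHom ℚ).mapMatrix M from rfl, ← RingHom.map_det]; rfl
  have hNunit : IsUnit N := by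
    rw [isUnit_iff_isUnit_det, hNdet]
    exact isUnit_iff_ne_zero.mpr (by exact_mod_cast hdet0)
  have hNij : ∀ (i : Fin 3), N i 0 = (v₁ i : ℚ) ∧ N i 1 = (v₂ i : ℚ) ∧ N i 2 = (v₃ i : ℚ) :=
    fun i => ⟨rfl, rfl, rfl⟩
  -- uniqueness of rational representations
  have huniq : ∀ (c : Fin 3 → ℚ) (j : Fin 3),
      (∀ i, c 0 * (v₁ i : ℚ) + c 1 * (v₂ i : ℚ) + c 2 * (v₃ i : ℚ) = N i j) →
      c = Pi.single j 1 := by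
    intro c j hc
    have hinj : Function.Injective N.mulVec := Matrix.mulVec_injective_iff_isUnit.mpr hNunit
    apply hinj
    rw [Matrix.mulVec_single_one]
    funext i
    rw [show N.col j i = N i j from rfl, ← hc i]
    simp only [Matrix.mulVec, dotProduct, Fin.sum_univ_three,
      (hNij i).1, (hNij i).2.1, (hNij i).2.2]
    ring
  -- membership in the convex hull from a rational convex combination
  have hmem : ∀ (c : Fin 3 → ℚ) (u : Fin 3 → ℤ), (∀ i, 0 ≤ c i) → c 0 + c 1 + c 2 = 1 →
      (∀ i, (u i : ℚ) = c 0 * (v₁ i : ℚ) + c 1 * (v₂ i : ℚ) + c 2 * (v₃ i : ℚ)) →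
      toR3 u ∈ convexHull ℝ {toR3 v₁, toR3 v₂, toR3 v₃} := by
    intro c u hc0 hcs hu
    have hsR : ((c 0 : ℝ)) + (c 1 : ℝ) + (c 2 : ℝ) = 1 := by exact_mod_cast hcs
    have hmass := Finset.centerMass_mem_convexHull (s := {toR3 v₁, toR3 v₂, toR3 v₃})
      (Finset.univ : Finset (Fin 3)) (w := fun i => ((c i : ℝ)))
      (z := ![toR3 v₁, toR3 v₂, toR3 v₃])
      (fun i _ => show (0:ℝ) ≤ (c i : ℝ) from by exact_mod_cast hc0 i)
      (by rw [Fin.sum_univ_three, hsR]; norm_num)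
      (fun i _ => by fin_cases i <;> simp [Set.mem_insert_iff])
    have hceq : toR3 u = Finset.univ.centerMass (fun i => ((c i : ℝ)))
        ![toR3 v₁, toR3 v₂, toR3 v₃] := by
      funext i
      rw [Finset.centerMass]
      rw [Fin.sum_univ_three, Fin.sum_univ_three, hsR]
      have := hu i
      simp only [toR3, inv_one, one_smul, Pi.add_apply, Pi.smul_apply, smul_eq_mul,
        Matrix.cons_val_zero, Matrix.cons_val_one, Matrix.head_cons,
        Matrix.cons_val_two, Matrix.tail_cons]
      rw [one_mul]
      exact_mod_cast this
    rw [hceq]; exact hmass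
  -- main contradiction argument
  by_contra hcon
  push_neg at hcon
  have hMnotunit : ¬ IsUnit M := by
    rw [isUnit_iff_isUnit_det, Int.isUnit_iff]
    tauto
  have hnotsurj : ¬ Function.Surjective M.mulVec := fun h =>
    hMnotunit (Matrix.mulVec_surjective_iff_isUnit.mp h)
  rw [Function.Surjective] at hnotsurj
  push_neg at hnotsurj
  obtain ⟨p, hp⟩ := hnotsurj
  obtain ⟨a, ha⟩ := Matrix.mulVec_surjective_iff_isUnit.mpr hNunit (fun i => (p i : ℚ))
  -- some coordinate of a is not an integer
  have hfrac : ∃ i, Int.fract (a i) ≠ 0 := by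
    by_contra hall
    push_neg at hall
    apply hp (fun i => ⌊a i⌋)
    funext i
    have haZ : ∀ j, a j = (⌊a j⌋ : ℚ) := by
      intro j; have := hall j; rw [Int.fract, sub_eq_zero] at this; exact this
    have hpi : ((M.mulVec fun j => ⌊a j⌋) i : ℚ) = (p i : ℚ) := by
      rw [← congrFun ha i]
      simp only [Matrix.mulVec, dotProduct, hN, Matrix.map_apply]
      push_cast
      exact Finset.sum_congr rfl fun j _ => by rw [← haZ j]
    exact_mod_cast hpi
  set f : Fin 3 → ℚ := fun i => Int.fract (a i) with hf
  set q : Fin 3 → ℤ := fun i => p i - M.mulVec (fun j => ⌊a j⌋) i with hq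
  have hqc : ∀ i, (q i : ℚ) = f 0 * (v₁ i : ℚ) + f 1 * (v₂ i : ℚ) + f 2 * (v₃ i : ℚ) := by
    intro i
    have h1 := congrFun ha i
    simp only [Matrix.mulVec, dotProduct, Fin.sum_univ_three,
      (hNij i).1, (hNij i).2.1, (hNij i).2.2] at h1
    have h2 : ((M.mulVec fun j => ⌊a j⌋) i : ℚ)
        = (v₁ i : ℚ) * (⌊a 0⌋ : ℚ) + (v₂ i : ℚ) * (⌊a 1⌋ : ℚ) + (v₃ i : ℚ) * (⌊a 2⌋ : ℚ) := by
      have : (M.mulVec fun j => ⌊a j⌋) i = v₁ i * ⌊a 0⌋ + v₂ i * ⌊a 1⌋ + v₃ i * ⌊a 2⌋ := by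
        simp only [Matrix.mulVec, dotProduct, Fin.sum_univ_three]
        rfl
      rw [this]; push_cast; ring
    simp only [hq, hf, Int.fract]
    push_cast
    rw [h2, ← h1]
    ring
  have hf0 : ∀ i, 0 ≤ f i := fun i => Int.fract_nonneg _
  have hf1 : ∀ i, f i < 1 := fun i => Int.fract_lt_one _
  -- height of q
  have eq₁ : (v₁ 0 : ℚ) * (w (Pi.single 0 1) : ℚ) + (v₁ 1 : ℚ) * (w (Pi.single 1 1) : ℚ)
      + (v₁ 2 : ℚ) * (w (Pi.single 2 1) : ℚ) = 1 := by
    have h := w_eq_sum v₁ w; rw [hw₁, Fin.sum_univ_three] at h; exact_mod_cast h.symm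
  have eq₂ : (v₂ 0 : ℚ) * (w (Pi.single 0 1) : ℚ) + (v₂ 1 : ℚ) * (w (Pi.single 1 1) : ℚ)
      + (v₂ 2 : ℚ) * (w (Pi.single 2 1) : ℚ) = 1 := by
    have h := w_eq_sum v₂ w; rw [hw₂, Fin.sum_univ_three] at h; exact_mod_cast h.symm
  have eq₃ : (v₃ 0 : ℚ) * (w (Pi.single 0 1) : ℚ) + (v₃ 1 : ℚ) * (w (Pi.single 1 1) : ℚ)
      + (v₃ 2 : ℚ) * (w (Pi.single 2 1) : ℚ) = 1 := by
    have h := w_eq_sum v₃ w; rw [hw₃, Fin.sum_univ_three] at h; exact_mod_cast h.symm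
  have hwq : (w q : ℚ) = f 0 + f 1 + f 2 := by
    have h := w_eq_sum q w
    rw [Fin.sum_univ_three] at h
    have hQ : (w q : ℚ) = (q 0 : ℚ) * (w (Pi.single 0 1) : ℚ)
        + (q 1 : ℚ) * (w (Pi.single 1 1) : ℚ) + (q 2 : ℚ) * (w (Pi.single 2 1) : ℚ) := by
      exact_mod_cast h
    rw [hQ, hqc 0, hqc 1, hqc 2]
    linear_combination f 0 * eq₁ + f 1 * eq₂ + f 2 * eq₃
  -- w q ∈ {1, 2}
  have hs12 : w q = 1 ∨ w q = 2 := by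
    have hnz : f 0 + f 1 + f 2 ≠ 0 := by
      intro h0
      obtain ⟨i, hi⟩ := hfrac
      have h00 : f 0 = 0 := by nlinarith [hf0 0, hf0 1, hf0 2]
      have h01 : f 1 = 0 := by nlinarith [hf0 0, hf0 1, hf0 2]
      have h02 : f 2 = 0 := by nlinarith [hf0 0, hf0 1, hf0 2]
      fin_cases i
      · exact hi h00
      · exact hi h01
      · exact hi h02
    have hpos : (0 : ℚ) < (w q : ℚ) := by
      rw [hwq]
      rcases lt_or_eq_of_le (by nlinarith [hf0 0, hf0 1, hf0 2] :
        (0:ℚ) ≤ f 0 + f 1 + f 2) with h | h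
      · exact h
      · exact absurd h.symm hnz
    have hlt : (w q : ℚ) < 3 := by rw [hwq]; nlinarith [hf1 0, hf1 1, hf1 2]
    have h1 : 0 < w q := by exact_mod_cast hpos
    have h2 : w q < 3 := by exact_mod_cast hlt
    omega
  rcases hs12 with hs | hs
  · -- q is in the triangle
    have hfs : f 0 + f 1 + f 2 = 1 := by rw [← hwq, hs]; norm_num
    have hmemq := hmem f q hf0 hfs (fun i => hqc i)
    rcases hempty q hmemq with hqe | hqe | hqe
    · have := huniq f 0 (fun i => by rw [← hqc i, hqe, (hNij i).1])
      have : f 0 = 1 := by rw [this]; simp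
      linarith [hf1 0]
    · have := huniq f 1 (fun i => by rw [← hqc i, hqe, (hNij i).2.1])
      have : f 1 = 1 := by rw [this]; simp
      linarith [hf1 1]
    · have := huniq f 2 (fun i => by rw [← hqc i, hqe, (hNij i).2.2])
      have : f 2 = 1 := by rw [this]; simp
      linarith [hf1 2]
  · -- the reflected point is in the triangle
    set g : Fin 3 → ℚ := fun i => 1 - f i with hg
    set q' : Fin 3 → ℤ := fun i => v₁ i + v₂ i + v₃ i - q i with hq'
    have hg0 : ∀ i, 0 < g i := fun i => by simp [hg]; linarith [hf1 i]
    have hgs : g 0 + g 1 + g 2 = 1 := by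
      have hfs : f 0 + f 1 + f 2 = 2 := by rw [← hwq, hs]; norm_num
      simp [hg]; linarith
    have hq'c : ∀ i, (q' i : ℚ) = g 0 * (v₁ i : ℚ) + g 1 * (v₂ i : ℚ) + g 2 * (v₃ i : ℚ) := by
      intro i
      simp only [hq', hg]
      push_cast
      rw [hqc i]
      ring
    have hmemq' := hmem g q' (fun i => le_of_lt (hg0 i)) hgs (fun i => hq'c i)
    rcases hempty q' hmemq' with hqe | hqe | hqe
    · have hgg := huniq g 0 (fun i => by rw [← hq'c i, hqe, (hNij i).1])
      have : g 1 = 0 := by rw [hgg]; simp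
      linarith [hg0 1]
    · have hgg := huniq g 1 (fun i => by rw [← hq'c i, hqe, (hNij i).2.1])
      have : g 0 = 0 := by rw [hgg]; simp
      linarith [hg0 0]
    · have hgg := huniq g 2 (fun i => by rw [← hq'c i, hqe, (hNij i).2.2])
      have : g 0 = 0 := by rw [hgg]; simp
      linarith [hg0 0]
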